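/- Let (A,B) be a Pythagorean pair on a finite-dimensional Hilbert space 𝔥. If ξ ∈ 𝔥 satisfies lim_n ‖p_nξ‖ = c > 0 for some ray p and all the vectors p_nξ (n ∈ ℕ) are orthogonal to every vector contained in any ray, then we reach a contradiction; i.e. no such ξ exists. Equivalently, in finite dimensions the subspace 𝔚 of vectors partially contained in rays is trivial. -/

import Mathlib

open Filter Topology

noncomputable def pythWord {H : Type*} [NormedAddCommGroup H] [InnerProductSpace ℂ H]
    (A B : H →L[ℂ] H) (w : List Bool) : H →L[ℂ] H :=
  (w.map (fun x => if x then B else A)).prod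

/-- The operator `p_n` given by composing the operators of the first `n` letters of the
ray `p` (first letter applied first). `false` stands for `a ↦ A`, `true` for `b ↦ B`. -/
noncomputable def rayOp {H : Type*} [NormedAddCommGroup H] [InnerProductSpace ℂ H]
    (A B : H →L[ℂ] H) (p : ℕ → Bool) (n : ℕ) : H →L[ℂ] H :=
  pythWord A B ((List.range n).reverse.map p)

section Aux

variable {H : Type*} [NormedAddCommGroup H] [InnerProductSpace ℂ H] (A B : H →L[ℂ] H)

lemma pythWord_append' (l1 l2 : List Bool) :
    pythWord A B (l1 ++ l2) = pythWord A B l1 * pythWord A B l2 := by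
  simp [pythWord, List.map_append, List.prod_append]

lemma rayOp_succ' (p : ℕ → Bool) (n : ℕ) :
    rayOp A B p (n + 1) = (if p n then B else A) * rayOp A B p n := by
  simp [rayOp, List.range_succ, pythWord, List.map_append, List.prod_append]

lemma rayOp_add' (p : ℕ → Bool) (s m : ℕ) :
    rayOp A B p (s + m) = rayOp A B (fun k => p (s + k)) m * rayOp A B p s := by
  simp [rayOp, List.range_add, pythWord_append', List.map_reverse, List.map_map,
    Function.comp_def]

lemma rayOp_congr' (p q : ℕ → Bool) (n : ℕ) (h : ∀ k < n, p k = q k) :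
    rayOp A B p n = rayOp A B q n := by
  unfold rayOp
  congr 1
  apply List.map_congr_left
  intro k hk
  exact h k (List.mem_range.mp (List.mem_reverse.mp hk))

lemma pyth_norm_sq' [CompleteSpace H]
    (hpyth : (ContinuousLinearMap.adjoint A).comp A
      + (ContinuousLinearMap.adjoint B).comp B = 1) (x : H) :
    ‖A x‖ ^ 2 + ‖B x‖ ^ 2 = ‖x‖ ^ 2 := by
  have h := congrArg (fun T : H →L[ℂ] H => (inner ℂ (T x) x : ℂ)) hpyth
  simp only [ContinuousLinearMap.add_apply, ContinuousLinearMap.comp_apply,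
    ContinuousLinearMap.one_apply, inner_add_left,
    ContinuousLinearMap.adjoint_inner_left] at h
  rw [inner_self_eq_norm_sq_to_K, inner_self_eq_norm_sq_to_K,
    inner_self_eq_norm_sq_to_K] at h
  exact_mod_cast h

end Aux

set_option maxHeartbeats 1000000 in
theorem pythagorean_pair_no_partially_contained_finite_dim
    {H : Type*} [NormedAddCommGroup H] [InnerProductSpace ℂ H]
    [FiniteDimensional ℂ H]
    (A B : H →L[ℂ] H)
    (hpyth : (ContinuousLinearMap.adjoint A).comp A
      + (ContinuousLinearMap.adjoint B).comp B = 1) :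
    ¬ ∃ (ξ : H) (c : ℝ) (p : ℕ → Bool), 0 < c ∧
        Tendsto (fun n => ‖rayOp A B p n ξ‖) atTop (nhds c) ∧
        ∀ (n : ℕ) (η : H), (∃ q : ℕ → Bool, ∀ m, ‖rayOp A B q m η‖ = ‖η‖) →
          (inner ℂ (rayOp A B p n ξ) η : ℂ) = 0 := by
  rintro ⟨ξ, c, p, hc, hlim, horth⟩
  set u : ℕ → H := fun n => rayOp A B p n ξ with hu
  -- each single letter is a contraction
  have hstep : ∀ (x : H) (b : Bool), ‖(if b then B else A) x‖ ≤ ‖x‖ := by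
    intro x b
    have h := pyth_norm_sq' A B hpyth x
    have hA := norm_nonneg (A x)
    have hB := norm_nonneg (B x)
    have hx := norm_nonneg x
    have hA' : ‖A x‖ ≤ ‖x‖ := by nlinarith
    have hB' : ‖B x‖ ≤ ‖x‖ := by nlinarith
    cases b <;> simpa
  -- norms are bounded by ‖ξ‖
  have hbd : ∀ n, ‖u n‖ ≤ ‖ξ‖ := by
    intro n
    induction n with
    | zero => simp [hu, rayOp, pythWord]
    | succ n ih =>
      have : u (n + 1) = (if p n then B else A) (u n) := by
        show rayOp A B p (n + 1) ξ = _
        rw [rayOp_succ']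
        rfl
      rw [this]
      exact (hstep (u n) (p n)).trans ih
  -- extract a convergent subsequence in H
  obtain ⟨η, -, φ, hφ, hηlim⟩ :=
    (isCompact_closedBall (0 : H) ‖ξ‖).tendsto_subseq
      (x := u) (fun n => by simpa using hbd n)
  -- ‖η‖ = c
  have hηnorm : ‖η‖ = c := by
    have h1 : Tendsto (fun n => ‖u (φ n)‖) atTop (𝓝 ‖η‖) :=
      (continuous_norm.tendsto η).comp hηlim
    exact tendsto_nhds_unique h1 (hlim.comp hφ.tendsto_atTop)
  -- extract a convergent subsequence of shifted rays in Bool^ℕ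
  set σ : ℕ → ℕ → Bool := fun n k => p (φ n + k) with hσ
  obtain ⟨q, -, ψ, hψ, hq⟩ :=
    isCompact_univ.tendsto_subseq (x := σ) (fun n => Set.mem_univ _)
  -- eventual agreement on initial segments
  have hagree : ∀ m : ℕ, ∀ᶠ n in atTop, ∀ k < m, σ (ψ n) k = q k := by
    intro m
    have hk : ∀ k, ∀ᶠ n in atTop, σ (ψ n) k = q k := by
      intro k
      have h1 : Tendsto (fun n => σ (ψ n) k) atTop (𝓝 (q k)) :=
        (tendsto_pi_nhds.mp hq) k
      rw [nhds_discrete, tendsto_pure] at h1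
      exact h1
    have h2 : ∀ᶠ n in atTop, ∀ k ∈ Finset.range m, σ (ψ n) k = q k :=
      (Filter.eventually_all_finset _).mpr (fun k _ => hk k)
    filter_upwards [h2] with n hn k hkm
    exact hn k (Finset.mem_range.mpr hkm)
  -- η is contained in the ray q
  have hcontained : ∀ m, ‖rayOp A B q m η‖ = ‖η‖ := by
    intro m
    set T := rayOp A B q m with hT
    have hTlim : Tendsto (fun n => ‖T (u (φ (ψ n)))‖) atTop (𝓝 ‖T η‖) :=
      ((continuous_norm.comp T.continuous).tendsto η).comp (hηlim.comp hψ.tendsto_atTop)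
    have heq : ∀ᶠ n in atTop, ‖T (u (φ (ψ n)))‖ = ‖u (φ (ψ n) + m)‖ := by
      filter_upwards [hagree m] with n hn
      have hTn : T = rayOp A B (σ (ψ n)) m :=
        rayOp_congr' A B q (σ (ψ n)) m (fun k hk => (hn k hk).symm)
      have h5 : u (φ (ψ n) + m) = rayOp A B (σ (ψ n)) m (u (φ (ψ n))) := by
        show rayOp A B p (φ (ψ n) + m) ξ = _
        rw [rayOp_add' A B p (φ (ψ n)) m]
        rfl
      rw [h5, ← hTn]
    have hidx : Tendsto (fun n => φ (ψ n) + m) atTop atTop :=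
      tendsto_atTop_mono (fun n => Nat.le_add_right (φ (ψ n)) m) (hφ.comp hψ).tendsto_atTop
    have h3 : Tendsto (fun n => ‖u (φ (ψ n) + m)‖) atTop (𝓝 c) := hlim.comp hidx
    have h4 : ‖T η‖ = c := tendsto_nhds_unique (Filter.Tendsto.congr' heq hTlim) h3
    rw [h4, hηnorm]
  -- orthogonality passes to the limit: η ⟂ η
  have hortho : ∀ n, (inner ℂ (u (φ n)) η : ℂ) = 0 :=
    fun n => horth (φ n) η ⟨q, hcontained⟩
  have hinner : Tendsto (fun n => (inner ℂ (u (φ n)) η : ℂ)) atTop (𝓝 (inner ℂ η η)) :=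
    hηlim.inner tendsto_const_nhds
  have h0 : (inner ℂ η η : ℂ) = 0 := by
    have hz : Tendsto (fun n => (inner ℂ (u (φ n)) η : ℂ)) atTop (𝓝 0) := by
      simp only [hortho]
      exact tendsto_const_nhds
    exact tendsto_nhds_unique hinner hz
  have : η = 0 := inner_self_eq_zero.mp h0
  rw [this, norm_zero] at hηnorm
  exact hc.ne hηnorm
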